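/- For every sum-free set A ⊆ F_5^n with |A| ≥ 28·5^(n-3) and every surjective linear map φ : F_5^n → F_5^2, the function f(P) = |A ∩ φ^{-1}(P)| / 5^(n-3) is fishy. -/

import Mathlib

open Finset Pointwise

section Aux

variable {G : Type*} [AddCommGroup G] [Fintype G] [DecidableEq G]

lemma card_dvd_stable (H : AddSubgroup G) :
    ∀ (m : ℕ) (T : Finset G), T.card ≤ m → (∀ t ∈ T, ∀ h ∈ H, t + h ∈ T) →
    Nat.card H ∣ T.card := by
  classical
  intro m
  induction m with
  | zero =>
    intro T hle _
    rw [Nat.le_zero.mp hle]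
    exact dvd_zero _
  | succ m ih =>
    intro T hle hstab
    rcases T.eq_empty_or_nonempty with rfl | ⟨t₀, ht₀⟩
    · simp
    · set Hf : Finset G := univ.filter (· ∈ H) with hHf
      set C : Finset G := Hf.image (t₀ + ·) with hC
      have hCcard : C.card = Nat.card H := by
        rw [hC, card_image_of_injective _ (add_right_injective t₀), hHf,
          ← Fintype.card_subtype, ← Nat.card_eq_fintype_card]
      have hCT : C ⊆ T := by
        intro z hz
        rw [hC, mem_image] at hz
        obtain ⟨h, hh, rfl⟩ := hz
        rw [hHf, mem_filter] at hh
        exact hstab t₀ ht₀ h hh.2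
      have ht₀C : t₀ ∈ C := by
        rw [hC, mem_image]
        exact ⟨0, by simp [hHf, AddSubgroup.zero_mem], by simp⟩
      have hcards : (T \ C).card + C.card = T.card := card_sdiff_add_card_eq_card hCT
      have hCpos : 0 < C.card := card_pos.mpr ⟨t₀, ht₀C⟩
      have hstab' : ∀ t ∈ T \ C, ∀ h ∈ H, t + h ∈ T \ C := by
        intro w hw h hh
        rw [mem_sdiff] at hw ⊢
        refine ⟨hstab w hw.1 h hh, fun hmem => ?_⟩
        apply hw.2
        rw [hC, mem_image] at hmem
        obtain ⟨h₁, hh₁, heq⟩ := hmem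
        rw [hHf, mem_filter] at hh₁
        rw [hC, mem_image]
        refine ⟨h₁ - h, ?_, ?_⟩
        · rw [hHf, mem_filter]
          exact ⟨mem_univ _, AddSubgroup.sub_mem _ hh₁.2 hh⟩
        · have : w + h = t₀ + h₁ := heq.symm
          have e : t₀ + (h₁ - h) = (t₀ + h₁) - h := by abel
          rw [e, ← this]
          abel
      have := ih (T \ C) (by omega) hstab'
      rw [← hcards, hCcard]
      exact Nat.dvd_add this dvd_rfl
      
lemma weak_kneser : ∀ (m : ℕ) (X Y : Finset G), X.Nonempty → Y.Nonempty → Y.card ≤ m →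
    ∃ (H : AddSubgroup G) (S : Finset G), S.Nonempty ∧ S ⊆ X + Y ∧
      (∀ s ∈ S, ∀ h ∈ H, s + h ∈ S) ∧
      X.card + Y.card ≤ S.card + Nat.card H := by
  classical
  intro m
  induction m with
  | zero => intro X Y hX hY hle; have := hY.card_pos; omega
  | succ m ih =>
    intro X Y hX hY hle
    by_cases hcase : ∃ a ∈ X, ∃ b ∈ Y, ∃ b' ∈ Y, a + b' - b ∉ X
    · obtain ⟨a, ha, b, hb, b', hb', hnot⟩ := hcase
      set e : G := a - b with he
      set X' : Finset G := X ∪ Y.image (· + e) with hX'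
      set Y' : Finset G := Y.filter (fun y => y + e ∈ X) with hY'
      have hbY' : b ∈ Y' := by
        simp only [hY', mem_filter]
        refine ⟨hb, ?_⟩
        have : b + e = a := by rw [he]; abel
        rwa [this]
      have hb'Y' : b' ∉ Y' := by
        simp only [hY', mem_filter]
        rintro ⟨-, h⟩
        apply hnot
        have : b' + e = a + b' - b := by rw [he]; abel
        rwa [this] at h
      have hYsub : Y' ⊆ Y := filter_subset _ _
      have hcardY' : Y'.card < Y.card :=
        card_lt_card ⟨hYsub, fun hsub => hb'Y' (hsub hb')⟩
      have hsum : X' + Y' ⊆ X + Y := by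
        intro z hz
        rw [mem_add] at hz
        obtain ⟨x', hx', y', hy', rfl⟩ := hz
        rw [hX', mem_union] at hx'
        rcases hx' with hx | hx
        · exact add_mem_add hx (hYsub hy')
        · rw [mem_image] at hx
          obtain ⟨y, hy, rfl⟩ := hx
          rw [hY', mem_filter] at hy'
          have : y + e + y' = (y' + e) + y := by abel
          rw [this]
          exact add_mem_add hy'.2 hy
      have hcards : X.card + Y.card ≤ X'.card + Y'.card := by
        have h1 : X'.card = X.card + ((Y.image (· + e)) \ X).card := by
          rw [hX', ← Finset.union_sdiff_self_eq_union,
            card_union_of_disjoint disjoint_sdiff]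
        have h2 : Y'.card + (Y.filter (fun y => ¬ (y + e ∈ X))).card = Y.card := by
          rw [hY']; exact Finset.card_filter_add_card_filter_not _
        have h3 : (Y.filter (fun y => ¬ (y + e ∈ X))).card ≤ ((Y.image (· + e)) \ X).card := by
          apply Finset.card_le_card_of_injOn (fun y => y + e)
          · intro y hy
            rw [mem_coe, mem_filter] at hy
            rw [mem_coe, mem_sdiff]
            exact ⟨mem_image_of_mem _ hy.1, hy.2⟩
          · intro y1 _ y2 _ h
            exact add_right_cancel h
        omega
      obtain ⟨H, S, hS1, hS2, hS3, hS4⟩ :=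
        ih X' Y' (hX.mono (subset_union_left)) ⟨b, hbY'⟩ (by omega)
      exact ⟨H, S, hS1, hS2.trans hsum, hS3, by omega⟩
    · push_neg at hcase
      obtain ⟨b₀, hb₀⟩ := hY
      set T : AddSubgroup G := {
          carrier := {g | ∀ x ∈ X, x + g ∈ X}
          zero_mem' := by simp
          add_mem' := by
            intro g₁ g₂ h₁ h₂ x hx
            rw [← add_assoc]
            exact h₂ _ (h₁ x hx)
          neg_mem' := by
            intro g hg x hx
            have himg : X.image (· + g) = X := by
              apply Finset.eq_of_subset_of_card_le
              · intro z hz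
                rw [mem_image] at hz
                obtain ⟨x', hx', rfl⟩ := hz
                exact hg x' hx'
              · rw [card_image_of_injective _ (add_left_injective g)]
            rw [← himg, mem_image] at hx
            obtain ⟨x', hx', rfl⟩ := hx
            simpa using hx' } with hT
      have hmemT : ∀ g : G, g ∈ T ↔ ∀ x ∈ X, x + g ∈ X := fun g => Iff.rfl
      have hYT : ∀ y ∈ Y, y - b₀ ∈ T := by
        intro y hy
        rw [hmemT]
        intro x hx
        have h := hcase x hx b₀ hb₀ y hy
        have e : x + (y - b₀) = x + y - b₀ := by abel
        rwa [e]
      refine ⟨T, X + Y, hX.add ⟨b₀, hb₀⟩, le_refl _, ?_, ?_⟩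
      · intro s hs h hh
        rw [mem_add] at hs
        obtain ⟨x, hx, y, hy, rfl⟩ := hs
        have e : x + y + h = (x + h) + y := by abel
        rw [e]
        exact add_mem_add ((hmemT h).mp hh x hx) hy
      · have h1 : X.card ≤ (X + Y).card := by
          calc X.card = (X.image (· + b₀)).card :=
                (card_image_of_injective _ (add_left_injective b₀)).symm
            _ ≤ (X + Y).card := by
                apply card_le_card
                intro z hz
                rw [mem_image] at hz
                obtain ⟨x, hx, rfl⟩ := hz
                exact add_mem_add hx hb₀
        have h2 : Y.card ≤ Nat.card T := by
          have step : Y.card ≤ (univ.filter (· ∈ T)).card := by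
            apply Finset.card_le_card_of_injOn (fun y => y - b₀)
            · intro y hy
              rw [mem_coe, mem_filter]
              exact ⟨mem_univ _, hYT y hy⟩
            · intro y1 _ y2 _ h
              exact sub_left_injective h
          rwa [← Fintype.card_subtype, ← Nat.card_eq_fintype_card] at step
        omega

end Aux

/-- A function `f : F_5^2 → ℝ≥0` is fishy. -/
def Fishy (f : ZMod 5 × ZMod 5 → ℝ) : Prop :=
  (∀ P, 0 ≤ f P) ∧
  (28 ≤ ∑ P : ZMod 5 × ZMod 5, f P) ∧ (∀ P, f P ≤ 5) ∧
  (∀ X : Finset (ZMod 5 × ZMod 5), ∀ k : ℤ, Odd k → ∑ P ∈ X, f P ≠ (k : ℝ) / 2) ∧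
  (∀ P Q : ZMod 5 × ZMod 5, ∀ ε : ℤ, ε = 1 ∨ ε = -1 →
    0 < f P → 0 < f Q → 0 < f (P + ε • Q) →
    f P + f Q + (⌈f (P + ε • Q)⌉ : ℝ) ≤ 6)

theorem stmt_17 (n : ℕ) (A : Finset (Fin n → ZMod 5))
    (hsf : ∀ x ∈ A, ∀ y ∈ A, x + y ∉ A) (hcard : 28 * 5 ^ (n - 3) ≤ A.card)
    (φ : (Fin n → ZMod 5) →ₗ[ZMod 5] (ZMod 5 × ZMod 5)) (hφ : Function.Surjective φ) :
    Fishy (fun P => ((A.filter (fun x => φ x = P)).card : ℝ) / 5 ^ (n - 3)) := by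
  classical
  have hcardG : Fintype.card (Fin n → ZMod 5) = 5 ^ n := by simp
  -- dispatch small n
  by_cases hn : n < 3
  · exfalso
    have h1 : A.card ≤ 5 ^ n := hcardG ▸ Finset.card_le_univ A
    have h2 : (5:ℕ) ^ n ≤ 25 := by interval_cases n <;> norm_num
    have h3 : n - 3 = 0 := by omega
    rw [h3, pow_zero] at hcard
    omega
  push_neg at hn
  obtain ⟨M, hM⟩ : ∃ M : ℕ, M = 5 ^ (n - 3) := ⟨_, rfl⟩
  have hMpos : 0 < M := by rw [hM]; positivity
  have hMR : ((M : ℝ)) = 5 ^ (n - 3) := by rw [hM]; push_cast; ring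
  have hMRpos : (0:ℝ) < (M:ℝ) := by exact_mod_cast hMpos
  have h52 : (5:ℕ) ^ (n - 2) = 5 * M := by
    rw [hM, ← pow_succ']
    congr 1
    omega
  -- all fibers of φ have cardinality 5^(n-2)
  have fibcard : ∀ P : ZMod 5 × ZMod 5,
      (univ.filter (fun x => φ x = P)).card = 5 ^ (n - 2) := by
    have hconst : ∀ P : ZMod 5 × ZMod 5,
        (univ.filter (fun x => φ x = P)).card = (univ.filter (fun x => φ x = 0)).card := by
      intro P
      obtain ⟨xP, hxP⟩ := hφ P
      apply Finset.card_bij (fun x _ => x - xP)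
      · intro x hx
        rw [mem_filter] at hx ⊢
        refine ⟨mem_univ _, ?_⟩
        rw [map_sub, hx.2, hxP, sub_self]
      · intro x hx y hy hxy
        exact sub_left_injective hxy
      · intro y hy
        rw [mem_filter] at hy
        refine ⟨y + xP, ?_, by abel⟩
        rw [mem_filter]
        refine ⟨mem_univ _, ?_⟩
        rw [map_add, hy.2, hxP, zero_add]
    have hsum0 : (univ : Finset (Fin n → ZMod 5)).card
        = ∑ P : ZMod 5 × ZMod 5, (univ.filter (fun x => φ x = P)).card :=
      Finset.card_eq_sum_card_fiberwise (fun x _ => mem_univ (φ x))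
    have hsum : ∑ P : ZMod 5 × ZMod 5, (univ.filter (fun x => φ x = P)).card = 5 ^ n := by
      rw [← hsum0, card_univ, hcardG]
    have h25 : (univ : Finset (ZMod 5 × ZMod 5)).card = 25 := by simp
    have : 25 * (univ.filter (fun x : Fin n → ZMod 5 => φ x = 0)).card = 5 ^ n := by
      rw [← hsum]
      rw [Finset.sum_congr rfl (fun P _ => hconst P), Finset.sum_const, card_univ]
      simp [mul_comm]
    intro P
    rw [hconst P]
    have h5n : (5:ℕ) ^ n = 25 * 5 ^ (n - 2) := by
      obtain ⟨k, hk⟩ : ∃ k, n = k + 2 := ⟨n - 2, by omega⟩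
      subst hk
      rw [Nat.add_sub_cancel, pow_add]
      ring
    omega
  -- counting A fiberwise
  have hAfib : A.card = ∑ P : ZMod 5 × ZMod 5, (A.filter (fun x => φ x = P)).card :=
    Finset.card_eq_sum_card_fiberwise (fun x _ => mem_univ (φ x))
  have hfible : ∀ P : ZMod 5 × ZMod 5, (A.filter (fun x => φ x = P)).card ≤ 5 * M := by
    intro P
    rw [← h52, ← fibcard P]
    exact card_le_card (filter_subset_filter _ (subset_univ A))
  have h5R : (0:ℝ) < (5:ℝ) ^ (n - 3) := by positivity
  unfold Fishy
  refine ⟨?_, ?_, ?_, ?_, ?_⟩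
  · intro P
    exact div_nonneg (Nat.cast_nonneg _) (le_of_lt h5R)
  · have e1 : ∑ P : ZMod 5 × ZMod 5, ((A.filter (fun x => φ x = P)).card : ℝ) / 5 ^ (n - 3)
        = (A.card : ℝ) / 5 ^ (n - 3) := by
      rw [← Finset.sum_div, hAfib, Nat.cast_sum]
    rw [e1, le_div_iff₀ h5R]
    calc (28:ℝ) * 5 ^ (n - 3) = ((28 * 5 ^ (n - 3) : ℕ) : ℝ) := by push_cast; ring
      _ ≤ (A.card : ℝ) := by exact_mod_cast hcard
  · intro P
    rw [div_le_iff₀ h5R]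
    calc ((A.filter (fun x => φ x = P)).card : ℝ) ≤ ((5 * M : ℕ) : ℝ) := by
          exact_mod_cast hfible P
      _ = 5 * 5 ^ (n - 3) := by rw [hM]; push_cast; ring
  · intro Xs k hk heq
    rw [← Finset.sum_div] at heq
    field_simp at heq
    have h3 : 2 * (∑ P ∈ Xs, ((A.filter (fun x => φ x = P)).card : ℤ)) = k * 5 ^ (n - 3) := by
      have h2 : ((2 * ∑ P ∈ Xs, ((A.filter (fun x => φ x = P)).card : ℤ) : ℤ) : ℝ)
          = ((k * 5 ^ (n - 3) : ℤ) : ℝ) := by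
        push_cast
        linarith [heq]
      exact_mod_cast h2
    have h4 : Odd (k * (5:ℤ) ^ (n - 3)) := hk.mul (Odd.pow ⟨2, by norm_num⟩)
    rw [← h3] at h4
    exact (Int.not_odd_iff_even.mpr ⟨_, two_mul _⟩) h4
  · intro P Q ε hε hP hQ hR
    beta_reduce at hP hQ hR ⊢
    set R : ZMod 5 × ZMod 5 := P + ε • Q with hRdef
    set X : Finset (Fin n → ZMod 5) := A.filter (fun x => φ x = P) with hXdef
    set Y : Finset (Fin n → ZMod 5) := A.filter (fun x => φ x = Q) with hYdef
    set Z : Finset (Fin n → ZMod 5) := A.filter (fun x => φ x = R) with hZdef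
    have hXpos : 0 < X.card := by
      rcases Nat.eq_zero_or_pos X.card with h0 | h
      · rw [h0] at hP; norm_num at hP
      · exact h
    have hYpos : 0 < Y.card := by
      rcases Nat.eq_zero_or_pos Y.card with h0 | h
      · rw [h0] at hQ; norm_num at hQ
      · exact h
    have hZpos : 0 < Z.card := by
      rcases Nat.eq_zero_or_pos Z.card with h0 | h
      · rw [h0] at hR; norm_num at hR
      · exact h
    set Y' : Finset (Fin n → ZMod 5) := if ε = 1 then Y else Y.image (fun y => -y) with hY'def
    have hY'card : Y'.card = Y.card := by
      rcases hε with rfl | rfl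
      · rw [hY'def, if_pos rfl]
      · rw [hY'def, if_neg (by norm_num)]
        exact card_image_of_injective _ neg_injective
    have hXY'R : ∀ w ∈ X + Y', φ w = R := by
      intro w hw
      rw [mem_add] at hw
      obtain ⟨x, hx, y', hy', rfl⟩ := hw
      rw [hXdef, mem_filter] at hx
      rcases hε with rfl | rfl
      · rw [hY'def, if_pos rfl, hYdef, mem_filter] at hy'
        rw [map_add, hx.2, hy'.2, hRdef, one_zsmul]
      · rw [hY'def, if_neg (by norm_num), mem_image] at hy'
        obtain ⟨y, hy, rfl⟩ := hy'
        rw [hYdef, mem_filter] at hy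
        rw [map_add, map_neg, hx.2, hy.2, hRdef, neg_one_zsmul]
    have hXY'A : ∀ w ∈ X + Y', w ∉ A := by
      intro w hw hwA
      rw [mem_add] at hw
      obtain ⟨x, hx, y', hy', heq2⟩ := hw
      rw [hXdef, mem_filter] at hx
      rcases hε with rfl | rfl
      · rw [hY'def, if_pos rfl, hYdef, mem_filter] at hy'
        exact hsf x hx.1 y' hy'.1 (heq2 ▸ hwA)
      · rw [hY'def, if_neg (by norm_num), mem_image] at hy'
        obtain ⟨y, hy, rfl⟩ := hy'
        rw [hYdef, mem_filter] at hy
        apply hsf w hwA y hy.1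
        have e : w + y = x := by rw [← heq2]; abel
        rw [e]
        exact hx.1
    obtain ⟨H, S, hSne, hSsub, hSstab, hScard⟩ :=
      weak_kneser Y'.card X Y' (card_pos.mp hXpos) (card_pos.mp (hY'card ▸ hYpos)) le_rfl
    have hSR : ∀ s ∈ S, φ s = R := fun s hs => hXY'R s (hSsub hs)
    have hSZ : ∀ z ∈ Z, z ∉ S := fun z hz hzS =>
      hXY'A z (hSsub hzS) (mem_filter.mp hz).1
    obtain ⟨s₀, hs₀⟩ := hSne
    have hHker : ∀ h ∈ H, φ h = 0 := by
      intro h hh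
      have h1 := hSR _ (hSstab s₀ hs₀ h hh)
      rw [map_add, hSR s₀ hs₀] at h1
      exact add_eq_left.mp h1
    have hHdvd : Nat.card H ∣ 5 ^ n := by
      have h1 := AddSubgroup.card_addSubgroup_dvd_card H
      have h2 : Nat.card (Fin n → ZMod 5) = 5 ^ n := by rw [Nat.card_eq_fintype_card, hcardG]
      rwa [h2] at h1
    obtain ⟨j, hjn, hj⟩ := (Nat.dvd_prime_pow (by norm_num : Nat.Prime 5)).mp hHdvd
    by_cases hjle : j ≤ n - 3
    · -- small stabilizer case
      have hhM : Nat.card H ∣ M := by rw [hj, hM]; exact pow_dvd_pow 5 hjle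
      have hhle : Nat.card H ≤ M := Nat.le_of_dvd hMpos hhM
      set fibR : Finset (Fin n → ZMod 5) := univ.filter (fun x => φ x = R) with hfibRdef
      have hSfib : S ⊆ fibR := fun s hs => mem_filter.mpr ⟨mem_univ _, hSR s hs⟩
      have hZfib : Z ⊆ fibR \ S := fun z hz => mem_sdiff.mpr
        ⟨mem_filter.mpr ⟨mem_univ _, (mem_filter.mp hz).2⟩, hSZ z hz⟩
      have hu1 : (fibR \ S).card + S.card = fibR.card := card_sdiff_add_card_eq_card hSfib
      have hfibRcard : fibR.card = 5 * M := by rw [hfibRdef, fibcard R, h52]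
      have hZle : Z.card ≤ (fibR \ S).card := card_le_card hZfib
      have hstab' : ∀ w ∈ fibR \ S, ∀ h ∈ H, w + h ∈ fibR \ S := by
        intro w hw h hh
        rw [mem_sdiff] at hw ⊢
        constructor
        · rw [mem_filter]
          refine ⟨mem_univ _, ?_⟩
          rw [map_add, (mem_filter.mp hw.1).2, hHker h hh, add_zero]
        · intro hmem
          apply hw.2
          have h2 := hSstab _ hmem (-h) (AddSubgroup.neg_mem _ hh)
          simpa using h2
      have hudvd : Nat.card H ∣ (fibR \ S).card := card_dvd_stable H _ _ le_rfl hstab'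
      obtain ⟨t, ht⟩ : ∃ t : ℕ, t = (Z.card + M - 1) / M := ⟨_, rfl⟩
      obtain ⟨W, hW⟩ : ∃ W : ℕ, W = M * t := ⟨_, rfl⟩
      have hdm : W + (Z.card + M - 1) % M = Z.card + M - 1 := by
        rw [hW, ht]; exact Nat.div_add_mod _ _
      have hmod : (Z.card + M - 1) % M < M := Nat.mod_lt _ hMpos
      have htM1 : Z.card ≤ W := by omega
      have htM2 : W < Z.card + M := by omega
      have hd1 : Nat.card H ∣ W := hW ▸ hhM.mul_right t
      have hd2 : Nat.card H ∣ (fibR \ S).card + M := Nat.dvd_add hudvd hhM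
      have hWbound : W + Nat.card H ≤ (fibR \ S).card + M := by
        have h3 := Nat.dvd_sub hd2 hd1
        have h4 : 0 < (fibR \ S).card + M - W := by omega
        have h5 := Nat.le_of_dvd h4 h3
        omega
      have hkey : X.card + Y.card + W ≤ 6 * M := by
        rw [← hY'card]
        omega
      -- pass to the reals
      have hceil : (⌈(Z.card : ℝ) / 5 ^ (n - 3)⌉ : ℝ) ≤ (t : ℝ) := by
        have h1 : (⌈(Z.card : ℝ) / 5 ^ (n - 3)⌉ : ℤ) ≤ (t : ℤ) := by
          apply Int.ceil_le.mpr
          push_cast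
          rw [div_le_iff₀ h5R]
          calc (Z.card : ℝ) ≤ ((W : ℕ) : ℝ) := by exact_mod_cast htM1
            _ = (t : ℝ) * 5 ^ (n - 3) := by rw [hW, hM]; push_cast; ring
        exact_mod_cast h1
      have h6 : (X.card : ℝ) + (Y.card : ℝ) + (t : ℝ) * 5 ^ (n - 3) ≤ 6 * 5 ^ (n - 3) := by
        have h7 : ((X.card + Y.card + W : ℕ) : ℝ) ≤ ((6 * M : ℕ) : ℝ) := by
          exact_mod_cast hkey
        rw [hW, hM] at h7
        push_cast at h7
        linarith
      have h8 : (X.card : ℝ) / 5 ^ (n - 3) + (Y.card : ℝ) / 5 ^ (n - 3) + (t : ℝ) ≤ 6 := by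
        rw [← add_div]
        have h9 : ((X.card : ℝ) + (Y.card : ℝ)) / 5 ^ (n - 3) ≤ 6 - (t : ℝ) := by
          rw [div_le_iff₀ h5R]
          linarith
        linarith
      linarith
    · -- big stabilizer case : contradiction
      exfalso
      have hge : 5 ^ (n - 2) ≤ Nat.card H := by
        rw [hj]
        exact Nat.pow_le_pow_right (by norm_num) (by omega)
      set Hf : Finset (Fin n → ZMod 5) := univ.filter (· ∈ H) with hHfdef
      have hHfcard : Hf.card = Nat.card H := by
        rw [hHfdef, ← Fintype.card_subtype, ← Nat.card_eq_fintype_card]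
      have hHfK : Hf ⊆ univ.filter (fun x => φ x = 0) := by
        intro h hh
        rw [hHfdef, mem_filter] at hh
        rw [mem_filter]
        exact ⟨mem_univ _, hHker h hh.2⟩
      have heqK : Hf = univ.filter (fun x => φ x = 0) :=
        Finset.eq_of_subset_of_card_le hHfK (by rw [fibcard 0, hHfcard]; exact hge)
      obtain ⟨z, hz⟩ := card_pos.mp hZpos
      have hzS : z ∈ S := by
        have h1 : z - s₀ ∈ Hf := by
          rw [heqK, mem_filter]
          refine ⟨mem_univ _, ?_⟩
          rw [map_sub, (mem_filter.mp hz).2, hSR s₀ hs₀, sub_self]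
        rw [hHfdef, mem_filter] at h1
        have h2 := hSstab s₀ hs₀ _ h1.2
        simpa using h2
      exact hSZ z hz hzS
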